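/- If the homogeneous MAS with unstable agent dynamics A_a (A_a has at least one eigenvalue with nonnegative real part) is stabilized by a protocol of the form u = −(M ⊗ F_a)x, i.e., I_N ⊗ A_a − M ⊗ B_a F_a is Hurwitz, then M is nonsingular. -/

import Mathlib

open Matrix Kronecker

/-- All eigenvalues (over ℂ) have negative real part. -/
def Hurwitz {n : Type*} [Fintype n] [DecidableEq n] (M : Matrix n n ℝ) : Prop :=
  ∀ μ ∈ spectrum ℂ (M.map Complex.ofReal), μ.re < 0

lemma kron_mulVec {N n : ℕ} (A : Matrix (Fin N) (Fin N) ℂ) (B : Matrix (Fin n) (Fin n) ℂ)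
    (x : Fin N → ℂ) (y : Fin n → ℂ) :
    (A ⊗ₖ B) *ᵥ (fun p => x p.1 * y p.2) = fun p => (A *ᵥ x) p.1 * (B *ᵥ y) p.2 := by
  funext p
  simp only [mulVec, dotProduct, Fintype.sum_prod_type, kroneckerMap_apply]
  rw [Finset.sum_mul_sum]
  refine Finset.sum_congr rfl fun k _ => Finset.sum_congr rfl fun l _ => by ring

lemma map_kron {N n : ℕ} (A : Matrix (Fin N) (Fin N) ℝ) (B : Matrix (Fin n) (Fin n) ℝ) :
    (A ⊗ₖ B).map Complex.ofReal = (A.map Complex.ofReal) ⊗ₖ (B.map Complex.ofReal) := by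
  ext p q
  simp

/-- spectrum membership gives an eigenvector, over ℂ. -/
lemma exists_eigvec {n : Type*} [Fintype n] [DecidableEq n] (A : Matrix n n ℂ) {μ : ℂ}
    (h : μ ∈ spectrum ℂ A) : ∃ v ≠ 0, A *ᵥ v = μ • v := by
  have h1 : ¬ IsUnit (algebraMap ℂ (Matrix n n ℂ) μ - A) := spectrum.mem_iff.1 h
  have hdet : (algebraMap ℂ (Matrix n n ℂ) μ - A).det = 0 := by
    by_contra hd
    exact h1 ((Matrix.isUnit_iff_isUnit_det _).2 (isUnit_iff_ne_zero.2 hd))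
  obtain ⟨v, hv0, hv⟩ := (Matrix.exists_mulVec_eq_zero_iff).2 hdet
  refine ⟨v, hv0, ?_⟩
  have h2 : (algebraMap ℂ (Matrix n n ℂ) μ) *ᵥ v - A *ᵥ v = 0 := by
    rw [← Matrix.sub_mulVec]; exact hv
  have h3 : (algebraMap ℂ (Matrix n n ℂ) μ) *ᵥ v = μ • v := by
    funext i
    simp [Matrix.mulVec, dotProduct, Matrix.algebraMap_matrix_apply, Finset.sum_ite_eq,
      mul_comm]
  rw [h3, sub_eq_zero] at h2
  exact h2.symm

/-- An eigenvector gives spectrum membership, over ℂ. -/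
lemma eigvec_mem_spectrum {n : Type*} [Fintype n] [DecidableEq n] (A : Matrix n n ℂ) {μ : ℂ} {v : n → ℂ}
    (hv0 : v ≠ 0) (hv : A *ᵥ v = μ • v) : μ ∈ spectrum ℂ A := by
  rw [spectrum.mem_iff]
  intro hu
  have hdet := (Matrix.isUnit_iff_isUnit_det _).1 hu
  have h3 : (algebraMap ℂ (Matrix n n ℂ) μ) *ᵥ v = μ • v := by
    funext i
    simp [Matrix.mulVec, dotProduct, Matrix.algebraMap_matrix_apply, Finset.sum_ite_eq,
      mul_comm]
  have h2 : (algebraMap ℂ (Matrix n n ℂ) μ - A) *ᵥ v = 0 := by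
    rw [Matrix.sub_mulVec, h3, hv]; simp
  have : (algebraMap ℂ (Matrix n n ℂ) μ - A).det = 0 :=
    Matrix.exists_mulVec_eq_zero_iff.1 ⟨v, hv0, h2⟩
  rw [this] at hdet
  exact (isUnit_iff_ne_zero.1 hdet) rfl

set_option maxHeartbeats 1600000 in
/-- If A_a is unstable (some eigenvalue with nonnegative real part)
and I_N ⊗ A_a − M ⊗ B_a F_a is Hurwitz, then M is nonsingular. -/
theorem stmt11 {N n m : ℕ} (Aa : Matrix (Fin n) (Fin n) ℝ)
    (Ba : Matrix (Fin n) (Fin m) ℝ) (Fa : Matrix (Fin m) (Fin n) ℝ)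
    (M : Matrix (Fin N) (Fin N) ℝ)
    (hunst : ∃ μ ∈ spectrum ℂ (Aa.map Complex.ofReal), 0 ≤ μ.re)
    (hH : Hurwitz ((1 : Matrix (Fin N) (Fin N) ℝ) ⊗ₖ Aa - M ⊗ₖ (Ba * Fa))) :
    IsUnit M := by
  obtain ⟨μ, hμ, hμre⟩ := hunst
  by_contra hM
  -- M has determinant 0 over ℂ
  have hdetM : (M.map Complex.ofReal).det = 0 := by
    have h1 : ¬ IsUnit M.det := fun h => hM (M.isUnit_iff_isUnit_det.2 h)
    have h2 : M.det = 0 := by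
      rcases eq_or_ne M.det 0 with h | h
      · exact h
      · exact absurd (isUnit_iff_ne_zero.2 h) h1
    have : (Complex.ofRealHom.mapMatrix M).det = Complex.ofRealHom M.det :=
      (RingHom.map_det Complex.ofRealHom M).symm
    rw [h2, map_zero] at this
    exact this
  obtain ⟨w, hw0, hw⟩ := (Matrix.exists_mulVec_eq_zero_iff).2 hdetM
  obtain ⟨v, hv0, hv⟩ := exists_eigvec (Aa.map Complex.ofReal) hμ
  -- the closed-loop matrix over ℂ
  set Cc := ((1 : Matrix (Fin N) (Fin N) ℝ) ⊗ₖ Aa - M ⊗ₖ (Ba * Fa)).map Complex.ofReal with hCc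
  have hCc' : Cc = (1 : Matrix (Fin N) (Fin N) ℂ) ⊗ₖ (Aa.map Complex.ofReal)
      - (M.map Complex.ofReal) ⊗ₖ ((Ba * Fa).map Complex.ofReal) := by
    rw [hCc]
    ext p q
    simp [Matrix.one_apply, apply_ite Complex.ofReal]
  -- eigenvector z = w ⊗ v
  set z : Fin N × Fin n → ℂ := fun p => w p.1 * v p.2 with hz
  have hz0 : z ≠ 0 := by
    obtain ⟨i, hi⟩ := Function.ne_iff.1 hw0
    obtain ⟨j, hj⟩ := Function.ne_iff.1 hv0
    intro h
    have := congrFun h (i, j)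
    simp only [hz, Pi.zero_apply] at this
    exact (mul_ne_zero (by simpa using hi) (by simpa using hj)) this
  have hmul : Cc *ᵥ z = μ • z := by
    rw [hCc', Matrix.sub_mulVec, hz]
    rw [kron_mulVec, kron_mulVec]
    funext p
    simp only [Pi.sub_apply, Pi.smul_apply, smul_eq_mul]
    rw [hw, hv]
    simp only [Matrix.one_mulVec, Pi.zero_apply, Pi.smul_apply, smul_eq_mul]
    ring
  have hmem : μ ∈ spectrum ℂ Cc := eigvec_mem_spectrum Cc hz0 hmul
  have := hH μ hmem
  linarith
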